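/- Let u, v be pmfs on a finite set A and suppose a preference model P(y=1|a,a') satisfies P(y=1|a,a') ≥ 1/2 whenever r(a) ≥ r(a') for a fixed reward r. Then 1 − TV(v, u) ≤ min over γ > 0 of √((γ + 2·P(v ≻ u))·log((1+γ)/γ)), where TV is total variation distance and P(v ≻ u) is the win rate of v over u. -/

import Mathlib

open Finset

/-- Telescoping bound: `∑ xᵢ/(γ + Sᵢ) ≤ log((γ + S)/γ)` where `Sᵢ` are partial sums. -/
lemma tele_le (γ : ℝ) (hγ : 0 < γ) (U : ℕ → ℝ) (hU : ∀ i, 0 ≤ U i) :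
    ∀ N : ℕ, ∑ i ∈ Finset.range N, U i / (γ + ∑ j ∈ Finset.range (i + 1), U j)
      ≤ Real.log ((γ + ∑ i ∈ Finset.range N, U i) / γ) := by
  intro N
  induction N with
  | zero => simp [div_self hγ.ne']
  | succ N ih =>
      have hT : 0 ≤ ∑ i ∈ Finset.range N, U i := Finset.sum_nonneg fun i _ => hU i
      set T := ∑ i ∈ Finset.range N, U i with hTdef
      have ha : (0:ℝ) < γ + T := by linarith
      have hax : (0:ℝ) < γ + T + U N := by have := hU N; linarith
      have key : U N / (γ + T + U N) ≤ Real.log (γ + T + U N) - Real.log (γ + T) := by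
        have h1 : Real.log ((γ + T) / (γ + T + U N)) ≤ (γ + T) / (γ + T + U N) - 1 :=
          Real.log_le_sub_one_of_pos (by positivity)
        rw [Real.log_div ha.ne' hax.ne'] at h1
        have h2 : (γ + T) / (γ + T + U N) - 1 = -(U N / (γ + T + U N)) := by
          field_simp
          ring
        rw [h2] at h1
        linarith
      rw [Finset.sum_range_succ, Finset.sum_range_succ, ← hTdef]
      have hlog1 : Real.log ((γ + T) / γ) = Real.log (γ + T) - Real.log γ :=
        Real.log_div ha.ne' hγ.ne'
      have hlog2 : Real.log ((γ + (T + U N)) / γ)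
          = Real.log (γ + T + U N) - Real.log γ := by
        rw [← add_assoc]
        exact Real.log_div hax.ne' hγ.ne'
      have := ih
      rw [hlog1] at this
      rw [hlog2]
      have harr : γ + T + U N = γ + (T + U N) := by ring
      calc ∑ i ∈ Finset.range N, U i / (γ + ∑ j ∈ Finset.range (i + 1), U j)
            + U N / (γ + (T + U N))
          ≤ (Real.log (γ + T) - Real.log γ)
            + (Real.log (γ + T + U N) - Real.log (γ + T)) := by
            rw [← harr]; exact add_le_add this key
        _ = Real.log (γ + T + U N) - Real.log γ := by ring

theorem one_sub_tv_le_winrate_bound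
    {A : Type*} [Fintype A] [Nonempty A]
    (u v : A → ℝ) (r : A → ℝ) (P : A → A → ℝ)
    (hu_nonneg : ∀ a, 0 ≤ u a) (hu_sum : ∑ a, u a = 1)
    (hv_nonneg : ∀ a, 0 ≤ v a) (hv_sum : ∑ a, v a = 1)
    (hP_mem : ∀ a a', P a a' ∈ Set.Icc (0 : ℝ) 1)
    (hP_half : ∀ a a', r a' ≤ r a → (1 : ℝ) / 2 ≤ P a a') :
    ∀ γ : ℝ, 0 < γ →
      1 - (1 / 2) * ∑ a, |v a - u a| ≤
        Real.sqrt ((γ + 2 * ∑ a, ∑ a', v a * u a' * P a a') *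
          Real.log ((1 + γ) / γ)) := by
  classical
  intro γ hγ
  set n := Fintype.card A with hn
  -- monotone enumeration g : Fin n ≃ A with r ∘ g monotone
  obtain ⟨e⟩ : Nonempty (A ≃ Fin n) := ⟨Fintype.equivFin A⟩
  set σ : Equiv.Perm (Fin n) := Tuple.sort (r ∘ e.symm) with hσ
  set g : Fin n ≃ A := σ.trans e.symm with hg
  have hgmono : ∀ i j : Fin n, i ≤ j → r (g i) ≤ r (g j) := by
    intro i j hij
    exact Tuple.monotone_sort (r ∘ e.symm) hij
  -- F : cumulative u-mass
  set F : A → ℝ := fun a => ∑ a' ∈ Finset.univ.filter (fun a' => g.symm a' ≤ g.symm a), u a'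
    with hF
  have hF_nonneg : ∀ a, 0 ≤ F a := fun a => Finset.sum_nonneg fun a' _ => hu_nonneg a'
  have hγF : ∀ a, 0 < γ + F a := fun a => by have := hF_nonneg a; linarith
  -- W : win rate
  set W : ℝ := ∑ a, ∑ a', v a * u a' * P a a' with hW
  set L : ℝ := Real.log ((1 + γ) / γ) with hL
  have hL_nonneg : 0 ≤ L := by
    apply Real.log_nonneg
    rw [le_div_iff₀ hγ]; linarith
  -- Step 1: 1 - TV = ∑ min ≤ ∑ √(v u)
  have step1 : 1 - (1/2) * ∑ a, |v a - u a| ≤ ∑ a, Real.sqrt (v a * u a) := by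
    have hmin : ∀ a, min (v a) (u a) ≤ Real.sqrt (v a * u a) := by
      intro a
      have h0 : 0 ≤ min (v a) (u a) := le_min (hv_nonneg a) (hu_nonneg a)
      have : min (v a) (u a) * min (v a) (u a) ≤ v a * u a :=
        mul_le_mul (min_le_left _ _) (min_le_right _ _) h0 (hv_nonneg a)
      calc min (v a) (u a) = Real.sqrt (min (v a) (u a) * min (v a) (u a)) :=
            (Real.sqrt_mul_self h0).symm
        _ ≤ Real.sqrt (v a * u a) := Real.sqrt_le_sqrt this
    have hmeq : ∀ a, min (v a) (u a) = (v a + u a - |v a - u a|) / 2 := by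
      intro a
      rcases le_total (v a) (u a) with h | h
      · rw [min_eq_left h, abs_of_nonpos (by linarith)]; ring
      · rw [min_eq_right h, abs_of_nonneg (by linarith)]; ring
    have : ∑ a, min (v a) (u a) = 1 - (1/2) * ∑ a, |v a - u a| := by
      simp only [hmeq]
      rw [← Finset.sum_div, Finset.sum_sub_distrib, Finset.sum_add_distrib,
        hu_sum, hv_sum]
      ring
    rw [← this]
    exact Finset.sum_le_sum fun a _ => hmin a
  -- Step 2: Cauchy–Schwarz
  have step2 : ∑ a, Real.sqrt (v a * u a)
      ≤ Real.sqrt (∑ a, v a * (γ + F a)) * Real.sqrt (∑ a, u a / (γ + F a)) := by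
    have := Real.sum_sqrt_mul_sqrt_le (f := fun a => v a * (γ + F a))
      (g := fun a => u a / (γ + F a)) Finset.univ
      (fun a => mul_nonneg (hv_nonneg a) (hγF a).le)
      (fun a => div_nonneg (hu_nonneg a) (hγF a).le)
    refine le_trans (le_of_eq ?_) this
    apply Finset.sum_congr rfl
    intro a _
    rw [← Real.sqrt_mul (mul_nonneg (hv_nonneg a) (hγF a).le)]
    congr 1
    have hne : γ + F a ≠ 0 := (hγF a).ne'
    field_simp
  -- Step 3: ∑ v (γ + F) ≤ γ + 2W
  have step3 : ∑ a, v a * (γ + F a) ≤ γ + 2 * W := by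
    have h1 : ∑ a, v a * (γ + F a) = γ + ∑ a, v a * F a := by
      simp only [mul_add]
      rw [Finset.sum_add_distrib, ← Finset.sum_mul, hv_sum]
      ring
    rw [h1]
    have h2 : ∑ a, v a * F a ≤ 2 * W := by
      rw [hW, Finset.mul_sum]
      apply Finset.sum_le_sum
      intro a _
      rw [hF, Finset.mul_sum, Finset.mul_sum]
      calc ∑ a' ∈ Finset.univ.filter (fun a' => g.symm a' ≤ g.symm a), v a * u a'
          ≤ ∑ a' ∈ Finset.univ.filter (fun a' => g.symm a' ≤ g.symm a),
              2 * (v a * u a' * P a a') := by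
            apply Finset.sum_le_sum
            intro a' ha'
            have hr : r a' ≤ r a := by
              have := hgmono (g.symm a') (g.symm a) (by simpa using (Finset.mem_filter.1 ha').2)
              simpa using this
            have hP := hP_half a a' hr
            have hvu : 0 ≤ v a * u a' := mul_nonneg (hv_nonneg a) (hu_nonneg a')
            nlinarith
        _ ≤ ∑ a', 2 * (v a * u a' * P a a') := by
            apply Finset.sum_le_sum_of_subset_of_nonneg (Finset.filter_subset _ _)
            intro a' _ _
            have := (hP_mem a a').1
            have hvu : 0 ≤ v a * u a' := mul_nonneg (hv_nonneg a) (hu_nonneg a')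
            positivity
    linarith
  -- Step 4: ∑ u/(γ+F) ≤ L, via telescoping
  set U : ℕ → ℝ := fun i => if h : i < n then u (g ⟨i, h⟩) else 0 with hU
  have hU_nonneg : ∀ i, 0 ≤ U i := by
    intro i; rw [hU]; dsimp only
    split
    · exact hu_nonneg _
    · exact le_refl 0
  have hFbridge : ∀ i : Fin n, F (g i) = ∑ j ∈ Finset.range (i.val + 1), U j := by
    intro i
    rw [hF]
    simp only [Equiv.symm_apply_apply]
    rw [eq_comm]
    apply Finset.sum_bij' (i := fun (m : ℕ) (hm : m ∈ Finset.range (i.val + 1)) =>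
        g (⟨m, lt_of_le_of_lt (Nat.lt_succ_iff.1 (Finset.mem_range.1 hm)) i.2⟩ : Fin n))
      (j := fun (a' : A) _ => (g.symm a').val)
    case hi =>
      intro m hm
      simp only [Finset.mem_filter, Finset.mem_univ, true_and, Equiv.symm_apply_apply]
      exact Nat.lt_succ_iff.1 (Finset.mem_range.1 hm)
    case hj =>
      intro a' ha'
      simp only [Finset.mem_filter, Finset.mem_univ, true_and] at ha'
      exact Finset.mem_range.2 (Nat.lt_succ_of_le ha')
    case left_neg => intro m hm; simp
    case right_neg => intro a' ha'; simp
    case h =>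
      intro m hm
      rw [hU]
      have hmn : m < n := lt_of_le_of_lt (Nat.lt_succ_iff.1 (Finset.mem_range.1 hm)) i.2
      simp [hmn]
  have step4 : ∑ a, u a / (γ + F a) ≤ L := by
    have hsum : ∑ a, u a / (γ + F a) = ∑ i ∈ Finset.range n,
        U i / (γ + ∑ j ∈ Finset.range (i + 1), U j) := by
      rw [← Equiv.sum_comp g (fun a => u a / (γ + F a)), ← Fin.sum_univ_eq_sum_range]
      apply Finset.sum_congr rfl
      intro i _
      rw [hFbridge i]
      congr 1
      rw [hU]; simp [i.2]
    have hUsum : ∑ i ∈ Finset.range n, U i = 1 := by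
      rw [← Fin.sum_univ_eq_sum_range]
      have : ∀ i : Fin n, U i.val = u (g i) := by
        intro i; rw [hU]; simp [i.2]
      rw [Finset.sum_congr rfl fun i _ => this i]
      rw [Equiv.sum_comp g u]
      exact hu_sum
    rw [hsum]
    calc ∑ i ∈ Finset.range n, U i / (γ + ∑ j ∈ Finset.range (i + 1), U j)
        ≤ Real.log ((γ + ∑ i ∈ Finset.range n, U i) / γ) := tele_le γ hγ U hU_nonneg n
      _ = L := by rw [hUsum, hL, add_comm]
  -- Combine
  have hX_nonneg : 0 ≤ ∑ a, v a * (γ + F a) :=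
    Finset.sum_nonneg fun a _ => mul_nonneg (hv_nonneg a) (hγF a).le
  calc 1 - (1/2) * ∑ a, |v a - u a|
      ≤ ∑ a, Real.sqrt (v a * u a) := step1
    _ ≤ Real.sqrt (∑ a, v a * (γ + F a)) * Real.sqrt (∑ a, u a / (γ + F a)) := step2
    _ ≤ Real.sqrt (γ + 2 * W) * Real.sqrt L := by
        apply mul_le_mul (Real.sqrt_le_sqrt step3) (Real.sqrt_le_sqrt step4)
          (Real.sqrt_nonneg _) (Real.sqrt_nonneg _)
    _ = Real.sqrt ((γ + 2 * W) * L) := by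
        have hW_nonneg : 0 ≤ W := Finset.sum_nonneg fun a _ => Finset.sum_nonneg fun a' _ =>
          mul_nonneg (mul_nonneg (hv_nonneg a) (hu_nonneg a')) (hP_mem a a').1
        exact (Real.sqrt_mul (by linarith) _).symm
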